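/- arXiv:2010.06170 — 3 statements merged into one kernel-verified Lean document; each statement's English description precedes it below -/
import Mathlib

section
/- For nonzero η, ζ ∈ R^2 with η + ζ = ξ, the null form symbol bound |η_1 ζ_2 − η_2 ζ_1| ≲ |ξ|^{1/2} (|η| + |ζ| − |ξ|)^{1/2} |η|^{1/2} |ζ|^{1/2} holds up to an absolute constant. -/
set_option maxHeartbeats 1000000 in
/-- elliptic symbol bound for the `Q₁₂` null form: there is an absolute
constant `C > 0` such that for all nonzero `η, ζ ∈ ℝ²`, with `ξ = η + ζ`,
`|η₁ζ₂ − η₂ζ₁| ≤ C |ξ|^{1/2} (|η|+|ζ|−|ξ|)^{1/2} |η|^{1/2} |ζ|^{1/2}`. -/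
theorem stmt6 : ∃ C > (0 : ℝ), ∀ (η ζ : EuclideanSpace ℝ (Fin 2)), η ≠ 0 → ζ ≠ 0 →
    |η 0 * ζ 1 - η 1 * ζ 0| ≤
      C * Real.sqrt ‖η + ζ‖ * Real.sqrt (‖η‖ + ‖ζ‖ - ‖η + ζ‖) *
        Real.sqrt ‖η‖ * Real.sqrt ‖ζ‖ := by
  refine ⟨2, by norm_num, ?_⟩
  intro η ζ hη hζ
  set a := ‖η‖ with ha'
  set b := ‖ζ‖ with hb'
  set c := ‖η + ζ‖ with hc'
  have ha : 0 < a := norm_pos_iff.mpr hη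
  have hb : 0 < b := norm_pos_iff.mpr hζ
  have hc : (0:ℝ) ≤ c := norm_nonneg _
  have htri : c ≤ a + b := norm_add_le η ζ
  have hs : (0:ℝ) ≤ a + b - c := by linarith
  have htri2 : |a - b| ≤ c := by
    have h := abs_norm_sub_norm_le η (-ζ)
    simpa [sub_neg_eq_add] using h
  set d : ℝ := inner ℝ η ζ with hd
  have hcs : |d| ≤ a * b := abs_real_inner_le_norm η ζ
  have hcs' := abs_le.mp hcs
  have hc2 : c^2 = a^2 + 2*d + b^2 := by
    simpa [ha', hb', hc', hd] using @norm_add_sq_real _ _ _ η ζ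
  have ha2 : a^2 = η 0 ^ 2 + η 1 ^ 2 := by
    rw [ha', EuclideanSpace.norm_eq, Real.sq_sqrt (by positivity)]
    simp [Fin.sum_univ_two, sq_abs]
  have hb2 : b^2 = ζ 0 ^ 2 + ζ 1 ^ 2 := by
    rw [hb', EuclideanSpace.norm_eq, Real.sq_sqrt (by positivity)]
    simp [Fin.sum_univ_two, sq_abs]
  have hdp : d = η 0 * ζ 0 + η 1 * ζ 1 := by
    simp [hd, PiLp.inner_apply, Fin.sum_univ_two, RCLike.inner_apply, mul_comm]
  have hcross : (η 0 * ζ 1 - η 1 * ζ 0)^2 = (a*b - d)*(a*b + d) := by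
    have : (a*b)^2 = (η 0 ^ 2 + η 1 ^ 2) * (ζ 0 ^ 2 + ζ 1 ^ 2) := by
      rw [mul_pow, ha2, hb2]
    nlinarith [this, hdp]
  have habd : 0 ≤ a*b + d := by linarith [hcs'.1]
  have habd2 : a*b + d ≤ 2*(a*b) := by linarith [hcs'.2]
  -- 2(ab - d) = (a+b)^2 - c^2 = (a+b+c)(a+b-c) ≤ 2(a+b)(a+b-c)
  have h1 : a*b - d ≤ (a+b) * (a+b-c) := by nlinarith [mul_le_mul_of_nonneg_right (show a+b+c ≤ 2*(a+b) by linarith) hs]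
  -- 2(ab + d) ≤ c^2
  have hab' : (a-b)^2 ≤ c^2 := by
    have h := abs_le.mp htri2
    nlinarith [h.1, h.2]
  have h2 : 2*(a*b + d) ≤ c^2 := by nlinarith [hab', hc2]
  -- ((a+b)(ab+d))^2 ≤ 8 (abc)^2
  have t1 : (a-b)^2*(a*b+d)^2 ≤ c^2*(a*b+d)^2 :=
    mul_le_mul_of_nonneg_right hab' (sq_nonneg _)
  have t2 : (a*b+d)^2 ≤ (2*(a*b))*(a*b+d) := by nlinarith [habd, habd2]
  have hK2 : ((a+b)*(a*b+d))^2 ≤ 8*(a*b*c)^2 := by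
    have q1 : ((a+b)*(a*b+d))^2 = (a-b)^2*(a*b+d)^2 + 4*(a*b)*(a*b+d)^2 := by ring
    have q2 : (a-b)^2*(a*b+d)^2 ≤ c^2*((2*(a*b))*(a*b+d)) :=
      le_trans t1 (mul_le_mul_of_nonneg_left t2 (sq_nonneg c))
    have q3 : 4*(a*b)*(a*b+d)^2 ≤ 2*(a*b)*(a*b+d)*c^2 := by
      have w : (2*(a*b)*(a*b+d)) * (2*(a*b+d)) ≤ (2*(a*b)*(a*b+d)) * c^2 :=
        mul_le_mul_of_nonneg_left h2 (by positivity)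
      nlinarith [w]
    have q4 : c^2*((2*(a*b))*(a*b+d)) + 2*(a*b)*(a*b+d)*c^2 ≤ 8*(a*b*c)^2 := by
      have w : (4*(a*b)*c^2) * (a*b+d) ≤ (4*(a*b)*c^2) * (2*(a*b)) :=
        mul_le_mul_of_nonneg_left habd2 (by positivity)
      nlinarith [w]
    linarith
  have hKnn : 0 ≤ (a+b)*(a*b+d) := mul_nonneg (by linarith) habd
  have hmnn : 0 ≤ a*b*c := by positivity
  have hK : (a+b)*(a*b+d) ≤ 3*(a*b*c) := by nlinarith [hK2, hKnn, hmnn]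
  have hfin : (η 0 * ζ 1 - η 1 * ζ 0)^2 ≤ 4*(c*(a+b-c)*a*b) := by
    rw [hcross]
    have s1 : (a*b-d)*(a*b+d) ≤ ((a+b)*(a+b-c))*(a*b+d) :=
      mul_le_mul_of_nonneg_right h1 habd
    nlinarith [s1, mul_le_mul_of_nonneg_right hK hs, hmnn, hs]
  have hRnn : (0:ℝ) ≤ 2 * Real.sqrt c * Real.sqrt (a+b-c) * Real.sqrt a * Real.sqrt b := by positivity
  have hR : (2 * Real.sqrt c * Real.sqrt (a+b-c) * Real.sqrt a * Real.sqrt b)^2 = 4*(c*(a+b-c)*a*b) := by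
    rw [mul_pow, mul_pow, mul_pow, mul_pow, Real.sq_sqrt hc, Real.sq_sqrt hs,
      Real.sq_sqrt ha.le, Real.sq_sqrt hb.le]
    ring
  calc |η 0 * ζ 1 - η 1 * ζ 0| = Real.sqrt ((η 0 * ζ 1 - η 1 * ζ 0)^2) := (Real.sqrt_sq_eq_abs _).symm
    _ ≤ Real.sqrt ((2 * Real.sqrt c * Real.sqrt (a+b-c) * Real.sqrt a * Real.sqrt b)^2) := by
        apply Real.sqrt_le_sqrt; rw [hR]; exact hfin
    _ = 2 * Real.sqrt c * Real.sqrt (a+b-c) * Real.sqrt a * Real.sqrt b := Real.sqrt_sq hRnn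
end

section
/- For nonzero ξ, η ∈ R^2 and i ∈ {1,2}, the symbol q_{0i}(ξ,η) := −⟨ξ⟩η_i + ξ_i⟨η⟩ satisfies |q_{0i}(ξ,η)| ≲ |ξ||η| ∠(ξ,η) + |ξ|/⟨η⟩ + |η|/⟨ξ⟩. -/
open InnerProductGeometry RealInnerProductSpace

private lemma coord_le_norm (x : EuclideanSpace ℝ (Fin 2)) (i : Fin 2) : |x i| ≤ ‖x‖ := by
  rw [EuclideanSpace.norm_eq]
  refine (Real.le_sqrt (abs_nonneg _) (by positivity)).2 ?_
  simp only [Real.norm_eq_abs, sq_abs]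
  exact Finset.single_le_sum (f := fun j => x j ^ 2) (fun j _ => sq_nonneg _)
    (Finset.mem_univ i)

private lemma gap_le (a : ℝ) (ha : 0 ≤ a) :
    Real.sqrt (1 + a ^ 2) - a ≤ 1 / Real.sqrt (1 + a ^ 2) := by
  have hpos : (0:ℝ) < Real.sqrt (1 + a ^ 2) :=
    Real.sqrt_pos.2 (by positivity)
  have hsq : Real.sqrt (1 + a ^ 2) ^ 2 = 1 + a ^ 2 :=
    Real.sq_sqrt (by positivity)
  have hage : a ≤ Real.sqrt (1 + a ^ 2) := by
    nlinarith [hsq, hpos]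
  rw [div_eq_inv_mul, mul_one, inv_eq_one_div, le_div_iff₀ hpos]
  nlinarith

private lemma unit_sub_le_angle (ξ η : EuclideanSpace ℝ (Fin 2)) (hξ : ξ ≠ 0) (hη : η ≠ 0) :
    ‖(‖ξ‖⁻¹ • ξ) - (‖η‖⁻¹ • η)‖ ≤ angle ξ η := by
  set u := (‖ξ‖⁻¹ • ξ) with hu
  set v := (‖η‖⁻¹ • η) with hv
  have hnu : ‖u‖ = 1 := norm_smul_inv_norm hξ
  have hnv : ‖v‖ = 1 := norm_smul_inv_norm hη
  have hinner : inner ℝ u v = Real.cos (angle ξ η) := by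
    rw [cos_angle, hu, hv, real_inner_smul_left, real_inner_smul_right]
    field_simp [norm_ne_zero_iff.2 hξ, norm_ne_zero_iff.2 hη]
  have hθ : 0 ≤ angle ξ η := angle_nonneg _ _
  have hcos : 1 - (angle ξ η) ^ 2 / 2 ≤ Real.cos (angle ξ η) :=
    Real.one_sub_sq_div_two_le_cos
  have h2 : ‖u - v‖ ^ 2 ≤ (angle ξ η) ^ 2 := by
    rw [norm_sub_sq_real, hnu, hnv, hinner]; nlinarith
  calc ‖u - v‖ = Real.sqrt (‖u - v‖ ^ 2) := by
        rw [Real.sqrt_sq (norm_nonneg _)]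
    _ ≤ Real.sqrt ((angle ξ η) ^ 2) := Real.sqrt_le_sqrt h2
    _ = angle ξ η := Real.sqrt_sq hθ

/-- there is an absolute constant `C > 0` such that for all nonzero
`ξ, η ∈ ℝ²` and `i ∈ {1,2}`, the symbol `q₀ᵢ(ξ,η) = −⟨ξ⟩ηᵢ + ξᵢ⟨η⟩` satisfies
`|q₀ᵢ(ξ,η)| ≤ C (|ξ||η| ∠(ξ,η) + |ξ|/⟨η⟩ + |η|/⟨ξ⟩)`. -/
theorem stmt9 : ∃ C > (0 : ℝ), ∀ (ξ η : EuclideanSpace ℝ (Fin 2)), ξ ≠ 0 → η ≠ 0 →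
    ∀ i : Fin 2,
    |-(Real.sqrt (1 + ‖ξ‖ ^ 2)) * η i + ξ i * Real.sqrt (1 + ‖η‖ ^ 2)| ≤
      C * (‖ξ‖ * ‖η‖ * angle ξ η + ‖ξ‖ / Real.sqrt (1 + ‖η‖ ^ 2)
        + ‖η‖ / Real.sqrt (1 + ‖ξ‖ ^ 2)) := by
  refine ⟨1, one_pos, fun ξ η hξ hη i => ?_⟩
  set s := Real.sqrt (1 + ‖ξ‖ ^ 2) with hs
  set t := Real.sqrt (1 + ‖η‖ ^ 2) with ht
  have hξn : (0:ℝ) < ‖ξ‖ := norm_pos_iff.2 hξ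
  have hηn : (0:ℝ) < ‖η‖ := norm_pos_iff.2 hη
  set u := (‖ξ‖⁻¹ • ξ : EuclideanSpace ℝ (Fin 2)) with hu
  set v := (‖η‖⁻¹ • η : EuclideanSpace ℝ (Fin 2)) with hv
  have hdecomp : -(s) * η i + ξ i * t
      = ‖ξ‖ * ‖η‖ * ((u - v) i) + ξ i * (t - ‖η‖) - (s - ‖ξ‖) * η i := by
    have : (u - v) i = ‖ξ‖⁻¹ * ξ i - ‖η‖⁻¹ * η i := by
      simp [hu, hv, PiLp.sub_apply, PiLp.smul_apply, smul_eq_mul]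
    rw [this]; field_simp; ring
  have h1 : |‖ξ‖ * ‖η‖ * ((u - v) i)| ≤ ‖ξ‖ * ‖η‖ * angle ξ η := by
    rw [abs_mul, abs_of_nonneg (by positivity : (0:ℝ) ≤ ‖ξ‖ * ‖η‖)]
    refine mul_le_mul_of_nonneg_left ?_ (by positivity)
    exact ((coord_le_norm (u - v) i).trans (unit_sub_le_angle ξ η hξ hη))
  have hts : ‖η‖ ≤ t := by
    rw [ht]; nlinarith [Real.sq_sqrt (show (0:ℝ) ≤ 1 + ‖η‖^2 by positivity),
      Real.sqrt_nonneg (1 + ‖η‖^2)]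
  have hss : ‖ξ‖ ≤ s := by
    rw [hs]; nlinarith [Real.sq_sqrt (show (0:ℝ) ≤ 1 + ‖ξ‖^2 by positivity),
      Real.sqrt_nonneg (1 + ‖ξ‖^2)]
  have h2 : |ξ i * (t - ‖η‖)| ≤ ‖ξ‖ / t := by
    rw [abs_mul, abs_of_nonneg (by linarith : (0:ℝ) ≤ t - ‖η‖)]
    calc |ξ i| * (t - ‖η‖) ≤ ‖ξ‖ * (1 / t) :=
          mul_le_mul (coord_le_norm ξ i) (gap_le ‖η‖ hηn.le) (by linarith) hξn.le
      _ = ‖ξ‖ / t := by ring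
  have h3 : |(s - ‖ξ‖) * η i| ≤ ‖η‖ / s := by
    rw [abs_mul, abs_of_nonneg (by linarith : (0:ℝ) ≤ s - ‖ξ‖)]
    calc (s - ‖ξ‖) * |η i| ≤ (1 / s) * ‖η‖ :=
          mul_le_mul (gap_le ‖ξ‖ hξn.le) (coord_le_norm η i) (abs_nonneg _) (by positivity)
      _ = ‖η‖ / s := by ring
  calc |-(s) * η i + ξ i * t|
      = |‖ξ‖ * ‖η‖ * ((u - v) i) + ξ i * (t - ‖η‖) - (s - ‖ξ‖) * η i| := by rw [hdecomp]
    _ ≤ |‖ξ‖ * ‖η‖ * ((u - v) i) + ξ i * (t - ‖η‖)| + |(s - ‖ξ‖) * η i| := abs_sub _ _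
    _ ≤ |‖ξ‖ * ‖η‖ * ((u - v) i)| + |ξ i * (t - ‖η‖)| + |(s - ‖ξ‖) * η i| := by
        gcongr; exact abs_add_le _ _
    _ ≤ ‖ξ‖ * ‖η‖ * angle ξ η + ‖ξ‖ / t + ‖η‖ / s := by gcongr
    _ = 1 * (‖ξ‖ * ‖η‖ * angle ξ η + ‖ξ‖ / t + ‖η‖ / s) := by ring
end

section
/- The Fourier symbol bound for the Γ¹ null structure: with p(ξ,τ,η,λ) := −1 + (⟨ξ,η⟩ τλ)/(⟨ξ⟩²⟨η⟩²), for all nonzero ξ, η ∈ R² and all τ, λ ∈ R one has |p(ξ,τ,η,λ)| ≤ sin² ∠(ξ,η) + 1/⟨ξ⟩² + 1/⟨η⟩² + |τλ − ⟨ξ,η⟩|/(⟨ξ⟩⟨η⟩). -/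
open InnerProductGeometry

lemma stmt18_aux (a b i s : ℝ) (ha : 0 < a) (hb : 0 < b) (hCS : i ^ 2 ≤ a * b) :
    |(-1 : ℝ) + i * s / ((1 + a) * (1 + b))| ≤
      (1 - i ^ 2 / (a * b)) + 1 / (1 + a) + 1 / (1 + b) +
        |s - i| / (Real.sqrt (1 + a) * Real.sqrt (1 + b)) := by
  have hA : (0:ℝ) < 1 + a := by linarith
  have hB : (0:ℝ) < 1 + b := by linarith
  have hAB : (0:ℝ) < (1 + a) * (1 + b) := mul_pos hA hB
  have hab : (0:ℝ) < a * b := mul_pos ha hb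
  set c := Real.sqrt (1 + a) * Real.sqrt (1 + b) with hc_def
  have hc : 0 < c := mul_pos (Real.sqrt_pos.2 hA) (Real.sqrt_pos.2 hB)
  have hc2 : c ^ 2 = (1 + a) * (1 + b) := by
    rw [hc_def, mul_pow, Real.sq_sqrt hA.le, Real.sq_sqrt hB.le]
  have key : (-1 : ℝ) + i * s / ((1 + a) * (1 + b)) =
      (i ^ 2 / ((1 + a) * (1 + b)) - 1) + i * (s - i) / ((1 + a) * (1 + b)) := by
    field_simp
    ring
  rw [key]
  have h1 : |i ^ 2 / ((1 + a) * (1 + b)) - 1| = 1 - i ^ 2 / ((1 + a) * (1 + b)) := by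
    rw [abs_of_nonpos, neg_sub]
    rw [sub_nonpos, div_le_one hAB]
    nlinarith
  have h1' : 1 - i ^ 2 / ((1 + a) * (1 + b)) ≤
      (1 - i ^ 2 / (a * b)) + 1 / (1 + a) + 1 / (1 + b) := by
    have keq : ((1 - i ^ 2 / (a * b)) + 1 / (1 + a) + 1 / (1 + b)) -
        (1 - i ^ 2 / ((1 + a) * (1 + b))) =
        (i ^ 2 * (a * b - (1 + a) * (1 + b)) + a * b * ((1 + a) + (1 + b))) /
          (a * b * ((1 + a) * (1 + b))) := by
      field_simp
      ring
    have hnum : 0 ≤ i ^ 2 * (a * b - (1 + a) * (1 + b)) + a * b * ((1 + a) + (1 + b)) := by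
      nlinarith [sq_nonneg i]
    have := div_nonneg hnum (le_of_lt (mul_pos hab hAB))
    linarith [keq ▸ this]
  have hi : |i| ≤ c := by
    calc |i| = Real.sqrt (i ^ 2) := (Real.sqrt_sq_eq_abs i).symm
      _ ≤ Real.sqrt (c ^ 2) := Real.sqrt_le_sqrt (by nlinarith)
      _ = c := Real.sqrt_sq hc.le
  have h2 : |i * (s - i) / ((1 + a) * (1 + b))| ≤ |s - i| / c := by
    rw [abs_div, abs_mul, abs_of_pos hAB, ← hc2]
    have step : |i| * |s - i| ≤ c * |s - i| :=
      mul_le_mul_of_nonneg_right hi (abs_nonneg _)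
    calc |i| * |s - i| / c ^ 2 ≤ c * |s - i| / c ^ 2 := by gcongr
      _ = |s - i| / c := by field_simp
  calc |(i ^ 2 / ((1 + a) * (1 + b)) - 1) + i * (s - i) / ((1 + a) * (1 + b))|
      ≤ |i ^ 2 / ((1 + a) * (1 + b)) - 1| + |i * (s - i) / ((1 + a) * (1 + b))| :=
        abs_add_le _ _
    _ ≤ ((1 - i ^ 2 / (a * b)) + 1 / (1 + a) + 1 / (1 + b)) + |s - i| / c := by
        rw [h1]; exact add_le_add h1' h2
    _ = (1 - i ^ 2 / (a * b)) + 1 / (1 + a) + 1 / (1 + b) + |s - i| / c := by ring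

/-- for nonzero `ξ, η ∈ ℝ²` and `τ, λ ∈ ℝ`, the symbol
`p(ξ,τ,η,λ) = −1 + ⟨ξ,η⟩τλ/(⟨ξ⟩²⟨η⟩²)` satisfies
`|p| ≤ sin² ∠(ξ,η) + 1/⟨ξ⟩² + 1/⟨η⟩² + |τλ − ⟨ξ,η⟩|/(⟨ξ⟩⟨η⟩)`. -/
theorem stmt18 (ξ η : EuclideanSpace ℝ (Fin 2)) (hξ : ξ ≠ 0) (hη : η ≠ 0)
    (τ lam : ℝ) :
    |(-1 : ℝ) + (inner ℝ ξ η : ℝ) * τ * lam / ((1 + ‖ξ‖ ^ 2) * (1 + ‖η‖ ^ 2))| ≤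
      Real.sin (angle ξ η) ^ 2 + 1 / (1 + ‖ξ‖ ^ 2) + 1 / (1 + ‖η‖ ^ 2) +
        |τ * lam - (inner ℝ ξ η : ℝ)| /
          (Real.sqrt (1 + ‖ξ‖ ^ 2) * Real.sqrt (1 + ‖η‖ ^ 2)) := by
  have hnξ : (0:ℝ) < ‖ξ‖ := norm_pos_iff.2 hξ
  have hnη : (0:ℝ) < ‖η‖ := norm_pos_iff.2 hη
  have ha : (0:ℝ) < ‖ξ‖ ^ 2 := by positivity
  have hb : (0:ℝ) < ‖η‖ ^ 2 := by positivity
  have hCS : (inner ℝ ξ η : ℝ) ^ 2 ≤ ‖ξ‖ ^ 2 * ‖η‖ ^ 2 := by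
    have h := abs_real_inner_le_norm ξ η
    nlinarith [abs_nonneg (inner ℝ ξ η : ℝ), sq_abs (inner ℝ ξ η : ℝ)]
  have hsin : Real.sin (angle ξ η) ^ 2 =
      1 - (inner ℝ ξ η : ℝ) ^ 2 / (‖ξ‖ ^ 2 * ‖η‖ ^ 2) := by
    rw [Real.sin_sq, cos_angle, div_pow, mul_pow]
  have hmain := stmt18_aux (‖ξ‖ ^ 2) (‖η‖ ^ 2) (inner ℝ ξ η : ℝ) (τ * lam) ha hb hCS
  rw [hsin]
  have harg : (inner ℝ ξ η : ℝ) * τ * lam = (inner ℝ ξ η : ℝ) * (τ * lam) := by ring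
  rw [harg]
  linarith
end
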